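/- Let Λ be a finite-dimensional selfinjective algebra and Q a finite acyclic quiver with s arrows, ordered as α_s, …, α_1 so that for i > j there is no path from t(α_i) to s(α_j). Then for every ΛQ-module M, the module Mono(M) = Mono_{α_1}(…Mono_{α_s}(M)…) is a separated monic (hence Gorenstein-projective) representation, and the epimorphism Mono(M) → M is a right approximation of M in Gproj ΛQ. -/

import Mathlib

open Function LinearMap

/-- A representation of the quiver with vertex set `V` and arrow family `E`
over the ring `Λ`: a `Λ`-module at every vertex and a linear map along every arrow. -/
structure QRep (Λ : Type) [Ring Λ] {V : Type} (E : V → V → Type) : Type 1 where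
  obj : V → Type
  [acg : ∀ i, AddCommGroup (obj i)]
  [mod : ∀ i, Module Λ (obj i)]
  map : ∀ {i j : V}, E i j → (obj i →ₗ[Λ] obj j)

attribute [instance] QRep.acg QRep.mod

namespace QRep

variable {Λ : Type} [Ring Λ] {V : Type} {E : V → V → Type}

/-- Morphisms of representations. -/
@[ext]
structure Hom (X Y : QRep Λ E) where
  app : ∀ i, X.obj i →ₗ[Λ] Y.obj i
  comm : ∀ {i j : V} (a : E i j), (Y.map a).comp (app i) = (app j).comp (X.map a)

def Hom.id (X : QRep Λ E) : Hom X X :=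
  ⟨fun _ => LinearMap.id, fun _ => by ext; rfl⟩

def Hom.comp {X Y Z : QRep Λ E} (g : Hom Y Z) (f : Hom X Y) : Hom X Z :=
  ⟨fun i => (g.app i).comp (f.app i), fun {i j} a => by
    ext x
    have h1 := LinearMap.congr_fun (f.comm a) x
    have h2 := LinearMap.congr_fun (g.comm a) (f.app i x)
    simp only [LinearMap.comp_apply] at h1 h2 ⊢
    rw [h2, h1]⟩

def Hom.sub {X Y : QRep Λ E} (f g : Hom X Y) : Hom X Y :=
  ⟨fun i => f.app i - g.app i, fun {i j} a => by
    ext x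
    have h1 := LinearMap.congr_fun (f.comm a) x
    have h2 := LinearMap.congr_fun (g.comm a) x
    simp only [LinearMap.comp_apply, LinearMap.sub_apply, map_sub] at h1 h2 ⊢
    rw [h1, h2]⟩

/-- Two representations are isomorphic. -/
def Iso (X Y : QRep Λ E) : Prop :=
  ∃ f : Hom X Y, ∀ i, Function.Bijective (f.app i)

/-- The assembled map `⊕_{a : j → i} X_j → X_i` at a vertex `i`. -/
noncomputable def uMap (X : QRep Λ E) (i : V) :
    (DirectSum (Σ j : V, E j i) (fun a => X.obj a.1)) →ₗ[Λ] X.obj i := by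
  classical exact DirectSum.toModule Λ _ _ (fun a => X.map a.2)

/-- A representation is separated monic if at every vertex the assembled map
from the direct sum of the incoming branches is injective. -/
def SeparatedMonic (X : QRep Λ E) : Prop :=
  ∀ i : V, Function.Injective (X.uMap i)

/-- Paths in the quiver given by the arrow family `E`. -/
def Path (E : V → V → Type) (i j : V) : Type := @Quiver.Path V ⟨E⟩ i j

/-- The quiver is acyclic: no nontrivial oriented cycles. -/
def Acyclic (E : V → V → Type) : Prop :=
  ∀ i : V, ∀ p : Path E i i, p = @Quiver.Path.nil V ⟨E⟩ i

/-- The representation `P_n(A) = A ⊗ P(n)`: at vertex `i` a copy of `A` for every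
path from `n` to `i`. -/
noncomputable def Pn (Λ : Type) [Ring Λ] (E : V → V → Type) (n : V) (A : Type)
    [AddCommGroup A] [Module Λ A] : QRep Λ E where
  obj i := Path E n i →₀ A
  map {i j} a := Finsupp.lmapDomain A Λ (fun p => @Quiver.Path.cons V ⟨E⟩ n i j p a)

/-- Projectivity of a representation, via the lifting property against
componentwise surjections of representations. -/
def Projective (P : QRep Λ E) : Prop :=
  ∀ (X Y : QRep Λ E) (g : Hom X Y), (∀ i, Function.Surjective (g.app i)) →
    ∀ f : Hom P Y, ∃ f' : Hom P X, g.comp f' = f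

/-- A module has no nonzero projective direct summand. -/
def NoProjSummand (Λ : Type) [Ring Λ] (M : Type) [AddCommGroup M] [Module Λ M] : Prop :=
  ∀ (P C : Type) [AddCommGroup P] [Module Λ P] [AddCommGroup C] [Module Λ C],
    Module.Projective Λ P → Nonempty (M ≃ₗ[Λ] P × C) → Subsingleton P

/-- A module has no nonzero injective direct summand. -/
def NoInjSummand (Λ : Type) [Ring Λ] (M : Type) [AddCommGroup M] [Module Λ M] : Prop :=
  ∀ (P C : Type) [AddCommGroup P] [Module Λ P] [AddCommGroup C] [Module Λ C],
    Module.Injective Λ P → Nonempty (M ≃ₗ[Λ] P × C) → Subsingleton P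

/-- A linear map factors through an injective module. -/
def FactorsThroughInjective (Λ : Type) [Ring Λ] {A B : Type}
    [AddCommGroup A] [Module Λ A] [AddCommGroup B] [Module Λ B] (f : A →ₗ[Λ] B) : Prop :=
  ∃ (J : Type) (_ : AddCommGroup J) (_ : Module Λ J), Module.Injective Λ J ∧
    ∃ (g : A →ₗ[Λ] J) (h : J →ₗ[Λ] B), f = h.comp g

/-- A morphism of representations factors through a projective representation. -/
def FactorsThroughProjective {X Y : QRep Λ E} (f : Hom X Y) : Prop :=
  ∃ (P : QRep Λ E), Projective P ∧ SeparatedMonic P ∧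
    ∃ (u : Hom X P) (v : Hom P Y), f = v.comp u

/-- Stable isomorphism: isomorphism in the stable category of Gorenstein-projective
representations modulo projectives. -/
def StIso (X Y : QRep Λ E) : Prop :=
  ∃ (f : Hom X Y) (g : Hom Y X),
    FactorsThroughProjective ((g.comp f).sub (Hom.id X)) ∧
    FactorsThroughProjective ((f.comp g).sub (Hom.id Y))

/-- `e : M →ₗ J` is an injective envelope: `J` is injective, `e` is injective and
its image is essential in `J`. -/
def IsInjEnvelope {M J : Type} [AddCommGroup M] [Module Λ M] [AddCommGroup J]
    [Module Λ J] (e : M →ₗ[Λ] J) : Prop :=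
  Module.Injective Λ J ∧ Function.Injective e ∧
    ∀ W : Submodule Λ J, Disjoint W (LinearMap.range e) → W = ⊥

end QRep
section MonoACons

variable {Λ : Type} [Ring Λ] {V : Type} {E : V → V → Type}

open QRep

namespace QRep

open Classical in
/-- The map `E_β` in the `Mono_α` construction: it is `single nil ∘ e` when `β = α`
and zero otherwise. -/
noncomputable def EMap (M : QRep Λ E) {v w : V} (α : E v w) {J : Type} [AddCommGroup J]
    [Module Λ J] (e : M.obj v →ₗ[Λ] J) {i j : V} (β : E i j) :
    M.obj i →ₗ[Λ] (Path E w j →₀ J) :=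
  if h : (⟨i, ⟨j, β⟩⟩ : Σ a : V, Σ b : V, E a b) = ⟨v, ⟨w, α⟩⟩ then by
    obtain ⟨h1, h2⟩ := Sigma.mk.inj_iff.mp h
    subst h1
    obtain ⟨h3, _⟩ := Sigma.mk.inj_iff.mp (eq_of_heq h2)
    subst h3
    exact (Finsupp.lsingle (R := Λ) (M := J) (@Quiver.Path.nil V ⟨E⟩ _)).comp e
  else 0

/-- The construction `Mono_α(M)`: the middle term of the componentwise split short
exact sequence `0 → P_w(J) → Mono_α(M) → M → 0` twisted by `e` at the arrow `α`. -/
noncomputable def MonoA (M : QRep Λ E) {v w : V} (α : E v w) {J : Type} [AddCommGroup J]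
    [Module Λ J] (e : M.obj v →ₗ[Λ] J) : QRep Λ E where
  obj i := M.obj i × (Path E w i →₀ J)
  map {i j} β := LinearMap.prod
    ((M.map β).comp (LinearMap.fst Λ _ _))
    ((Finsupp.lmapDomain J Λ (fun p => @Quiver.Path.cons V ⟨E⟩ w i j p β)).comp
        (LinearMap.snd Λ _ _)
      + (EMap M α e β).comp (LinearMap.fst Λ _ _))

/-- The canonical projection `Mono_α(M) → M`. -/
noncomputable def MonoAProj (M : QRep Λ E) {v w : V} (α : E v w) {J : Type} [AddCommGroup J]
    [Module Λ J] (e : M.obj v →ₗ[Λ] J) : Hom (MonoA M α e) M :=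
  ⟨fun _ => LinearMap.fst Λ _ _, fun {i j} β => by ext x; rfl⟩

/-- `IsMonoIter L M N π` holds when `N`, together with the projection `π : N → M`,
is obtained from `M` by successively applying the `Mono` construction at the arrows in
the list `L` (the head of `L` applied last), each time using an injective envelope. -/
inductive IsMonoIter : ∀ (L : List (Σ i : V, Σ j : V, E i j)) (M N : QRep Λ E), Hom N M → Prop
  | nil (M : QRep Λ E) : IsMonoIter [] M M (Hom.id M)
  | cons {L : List (Σ i : V, Σ j : V, E i j)} {M N : QRep Λ E} {π : Hom N M} {v w : V}
      (α : E v w) {J : Type} [AddCommGroup J] [Module Λ J] (e : N.obj v →ₗ[Λ] J)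
      (henv : IsInjEnvelope e) (h : IsMonoIter L M N π) :
      IsMonoIter (⟨v, ⟨w, α⟩⟩ :: L) M (MonoA N α e) (π.comp (MonoAProj N α e))

/-- `π : G → M` is a right approximation of `M` in the category of
Gorenstein-projective (= separated monic) representations. -/
def IsRightApprox {G M : QRep Λ E} (π : Hom G M) : Prop :=
  SeparatedMonic G ∧
    ∀ G' : QRep Λ E, SeparatedMonic G' → ∀ f : Hom G' M, ∃ g : Hom G' G, π.comp g = f

/-- `π : A → M` is the minimal right approximation of `M` in Gproj. -/
def IsMimo {M A : QRep Λ E} (π : Hom A M) : Prop :=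
  IsRightApprox π ∧ ∀ φ : Hom A A, π.comp φ = π → ∀ i, Function.Bijective (φ.app i)

end QRep
end MonoACons
namespace QRep

variable {Λ : Type} [Ring Λ] {V : Type} {E : V → V → Type}

/-- The reflected quiver `Q(v)`: every arrow ending at `v` is reversed. An arrow
`i → j` of `Q(v)` is either an arrow `i → j` of `Q` with `j ≠ v`, or the reversal
of an arrow `j → v` of `Q` (in which case `i = v`). -/
def reflE (E : V → V → Type) (v : V) : V → V → Type :=
  fun i j => {a : E i j // j ≠ v} ⊕ (PLift (i = v) × E j v)

/-- The representation `X'(v)` of the reflected quiver: the branch at `v` is replaced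
by `Ω`, the structure maps at the reversed arrows being the components of `kmap`. -/
noncomputable def reflRep (X : QRep Λ E) (v : V) (hsink : ∀ j, IsEmpty (E v j))
    (Ω : Type) [AddCommGroup Ω] [Module Λ Ω]
    (kmap : Ω →ₗ[Λ] DirectSum (Σ j : V, E j v) (fun a => X.obj a.1)) :
    QRep Λ (reflE E v) where
  obj i := (PLift (i = v) → Ω) × (PLift (i ≠ v) → X.obj i)
  map {i j} a :=
    match a with
    | Sum.inl ⟨a, _⟩ => LinearMap.prod 0
        (LinearMap.pi fun _ : PLift (j ≠ v) =>
          (X.map a).comp ((LinearMap.proj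
            (⟨fun h => (hsink j).false (h ▸ a)⟩ : PLift (i ≠ v))).comp
              (LinearMap.snd Λ _ _)))
    | Sum.inr ⟨hiv, a⟩ => LinearMap.prod 0
        (LinearMap.pi fun _ : PLift (j ≠ v) =>
          (((DirectSum.component Λ (Σ j : V, E j v) (fun b => X.obj b.1) ⟨j, a⟩).comp
              kmap).comp ((LinearMap.proj hiv).comp (LinearMap.fst Λ _ _))))

/-- The reflection relation: `Z` is (the result of) the reflection `X(v)` of the
Gorenstein-projective representation `X` at the sink `v`; it is obtained from the
representation `X'(v)` (defined via a projective cover `δ : C → coker u_X` with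
kernel `Ω` and the lifted kernel map `kmap`) by the `Mono` construction at all
reversed arrows. -/
def IsReflectionAt (X : QRep Λ E) (v : V) (hsink : ∀ j, IsEmpty (E v j))
    (Z : QRep Λ (reflE E v)) : Prop :=
  ∃ (Xbar : Type) (_ : AddCommGroup Xbar) (_ : Module Λ Xbar) (πc : X.obj v →ₗ[Λ] Xbar)
    (C : Type) (_ : AddCommGroup C) (_ : Module Λ C) (δ : C →ₗ[Λ] Xbar)
    (kmap : ↥(LinearMap.ker δ) →ₗ[Λ] DirectSum (Σ j : V, E j v) (fun a => X.obj a.1))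
    (t : C →ₗ[Λ] X.obj v),
    Function.Surjective πc ∧ LinearMap.ker πc = LinearMap.range (X.uMap v) ∧
    Module.Projective Λ C ∧ Function.Surjective δ ∧
    (∀ W : Submodule Λ C, W ⊔ LinearMap.ker δ = ⊤ → W = ⊤) ∧
    πc.comp t = δ ∧ (X.uMap v).comp kmap = t.comp (LinearMap.ker δ).subtype ∧
    ∃ (L : List (Σ i : V, Σ j : V, reflE E v i j))
      (π : Hom Z (reflRep X v hsink (↥(LinearMap.ker δ)) kmap)),
      (∀ x ∈ L, x.1 = v) ∧ L.Nodup ∧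
      (∀ (j : V) (a : E j v),
        (⟨v, j, Sum.inr ⟨⟨rfl⟩, a⟩⟩ : Σ i : V, Σ j : V, reflE E v i j) ∈ L) ∧
      IsMonoIter L (reflRep X v hsink (↥(LinearMap.ker δ)) kmap) Z π

/-- Transport of a representation along a family of bijections of arrow types. -/
def transport {E' : V → V → Type} (σ : ∀ i j, E i j ≃ E' i j) (X : QRep Λ E) :
    QRep Λ E' where
  obj := X.obj
  map {i j} a := X.map ((σ i j).symm a)

/-- `A'` is a (representation-level) syzygy of `A` in the Frobenius category of
Gorenstein-projective representations. -/
def IsSyzRep (A' A : QRep Λ E) : Prop :=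
  ∃ (P : QRep Λ E) (ι : Hom A' P) (π : Hom P A), Projective P ∧ SeparatedMonic P ∧
    (∀ i, Function.Injective (ι.app i)) ∧ (∀ i, Function.Surjective (π.app i)) ∧
    (∀ i, LinearMap.range (ι.app i) = LinearMap.ker (π.app i))

/-- `C` is a double syzygy `Ω²(A)`. -/
def IsOmega2 (A C : QRep Λ E) : Prop :=
  ∃ A', IsSyzRep A' A ∧ IsSyzRep C A'

end QRep

open CategoryTheory

/-- The category of Gorenstein-projective (= separated monic) representations. -/
def GP (Λ : Type) [Ring Λ] {V : Type} (E : V → V → Type) : Type 1 :=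
  {X : QRep Λ E // QRep.SeparatedMonic X}

instance (Λ : Type) [Ring Λ] {V : Type} (E : V → V → Type) :
    Category (GP Λ E) where
  Hom X Y := QRep.Hom X.1 Y.1
  id X := QRep.Hom.id X.1
  comp f g := g.comp f
  id_comp f := by apply QRep.Hom.ext; funext i; exact LinearMap.comp_id _
  comp_id f := by apply QRep.Hom.ext; funext i; exact LinearMap.id_comp _
  assoc f g h := by apply QRep.Hom.ext; funext i; rfl

/-- The relation identifying two morphisms whose difference factors through a
projective object. -/
def stRel (Λ : Type) [Ring Λ] {V : Type} (E : V → V → Type) : HomRel (GP Λ E) :=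
  fun {X Y} f g => QRep.FactorsThroughProjective (f.sub g)

/-- The stable category of Gorenstein-projective representations modulo projectives. -/
def StableGP (Λ : Type) [Ring Λ] {V : Type} (E : V → V → Type) : Type 1 :=
  CategoryTheory.Quotient (stRel Λ E)

noncomputable instance (Λ : Type) [Ring Λ] {V : Type} (E : V → V → Type) :
    Category (StableGP Λ E) :=
  inferInstanceAs (Category (CategoryTheory.Quotient (stRel Λ E)))


/-! ### Auxiliary development for the proof of Statement 8 -/

set_option maxHeartbeats 1000000

attribute [reducible] QRep.Path
attribute [reducible] QRep.SeparatedMonic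

namespace QRepAux

universe u₁ u₂

lemma and_casesOn_eq {A B : Prop} {motive : A ∧ B → Sort u₁} (p : A ∧ B)
    (f : ∀ a b, motive ⟨a, b⟩) : (And.casesOn p f : motive p) = f p.1 p.2 := by
  cases p; rfl

lemma eq_ndrec_self {α : Sort u₂} {a : α} {motive : α → Sort u₁} (m : motive a)
    (h : a = a) : (Eq.ndrec m h : motive a) = m := rfl

lemma eq_rec_self {α : Sort u₂} {a : α} {motive : (b : α) → a = b → Sort u₁}
    (m : motive a rfl) (h : a = a) : (@Eq.rec α a motive m a h) = m := rfl

section PathFin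
variable {V : Type} [Quiver.{0} V]

/-- the list of arrows of a path -/
def qpList {i : V} : ∀ {j : V}, Quiver.Path i j → List (Σ a : V, Σ b : V, a ⟶ b)
  | _, Quiver.Path.nil => []
  | _, @Quiver.Path.cons _ _ _ b c p a => (⟨b, ⟨c, a⟩⟩ : Σ a : V, Σ b : V, a ⟶ b) :: qpList p

/-- the list of intermediate vertices of a path -/
def qvList {i : V} : ∀ {j : V}, Quiver.Path i j → List V
  | _, Quiver.Path.nil => []
  | _, @Quiver.Path.cons _ _ _ b _ p _ => b :: qvList p

lemma qvList_spec (hacyc : ∀ i : V, ∀ p : Quiver.Path i i, p = Quiver.Path.nil) {i : V} :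
    ∀ {j : V} (p : Quiver.Path i j),
      (qvList p).Nodup ∧ j ∉ qvList p ∧ ∀ k ∈ qvList p, Nonempty (Quiver.Path k j) := by
  intro j p
  induction p with
  | nil => simp [qvList]
  | @cons b c p a ih =>
    obtain ⟨h1, h2, h3⟩ := ih
    have hcb : c ∉ qvList p ∧ c ≠ b := by
      constructor
      · intro hc
        obtain ⟨q⟩ := h3 c hc
        exact Quiver.Path.cons_ne_nil q a (hacyc c (q.cons a))
      · rintro rfl
        exact Quiver.Path.cons_ne_nil Quiver.Path.nil a (hacyc c (Quiver.Path.nil.cons a))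
    refine ⟨?_, ?_, ?_⟩
    · simp only [qvList, List.nodup_cons]
      exact ⟨h2, h1⟩
    · simp only [qvList, List.mem_cons, not_or]
      exact ⟨hcb.2, hcb.1⟩
    · intro k hk
      simp only [qvList, List.mem_cons] at hk
      rcases hk with rfl | hk
      · exact ⟨Quiver.Path.nil.cons a⟩
      · obtain ⟨q⟩ := h3 k hk
        exact ⟨q.cons a⟩

lemma qpList_length {i : V} : ∀ {j : V} (p : Quiver.Path i j),
    (qpList p).length = (qvList p).length := by
  intro j p
  induction p with
  | nil => rfl
  | cons p a ih => simpa [qpList, qvList] using ih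

lemma qpList_inj {i : V} : ∀ {j : V} (p q : Quiver.Path i j),
    qpList p = qpList q → p = q := by
  intro j p
  induction p with
  | nil =>
    intro q h
    cases q with
    | nil => rfl
    | cons q' a' => exact absurd h (by simp [qpList])
  | @cons b c p a ih =>
    intro q h
    cases q with
    | nil => exact absurd h (by simp [qpList])
    | @cons b' _ q' a' =>
      simp only [qpList, List.cons.injEq] at h
      obtain ⟨hhead, htail⟩ := h
      obtain ⟨rfl, h2⟩ := Sigma.mk.inj_iff.mp hhead
      obtain ⟨-, h3⟩ := Sigma.mk.inj_iff.mp (eq_of_heq h2)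
      obtain rfl := eq_of_heq h3
      rw [ih q' htail]

lemma qpath_finite (hV : Fintype V) (hE : ∀ i j : V, Fintype (i ⟶ j))
    (hacyc : ∀ i : V, ∀ p : Quiver.Path i i, p = Quiver.Path.nil) (i j : V) :
    Finite (Quiver.Path i j) := by
  letI := hV; letI := hE
  have hbound : ∀ p : Quiver.Path i j, (qpList p).length ≤ Fintype.card V := by
    intro p
    rw [qpList_length]
    exact (qvList_spec hacyc p).1.length_le_card
  have hfin : {l : List (Σ a : V, Σ b : V, a ⟶ b) | l.length ≤ Fintype.card V}.Finite :=
    List.finite_length_le _ _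
  haveI : Finite {l : List (Σ a : V, Σ b : V, a ⟶ b) // l.length ≤ Fintype.card V} :=
    hfin.to_subtype
  exact Finite.of_injective
    (fun p => (⟨qpList p, hbound p⟩ : {l : List (Σ a : V, Σ b : V, a ⟶ b) //
      l.length ≤ Fintype.card V}))
    (fun p q h => qpList_inj p q (congrArg Subtype.val h))

end PathFin

open QRep

open scoped Classical

section EWorld
variable {Λ : Type} [Ring Λ] {V : Type} {E : V → V → Type}

/-! E-world wrappers for path lemmas (to avoid instance-synthesis issues) -/

lemma pcons_ne_nil {w b : V} (p : @Quiver.Path V ⟨E⟩ w b) (γ : E b w) :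
    @Quiver.Path.cons V ⟨E⟩ w b w p γ ≠ @Quiver.Path.nil V ⟨E⟩ w :=
  @Quiver.Path.cons_ne_nil V ⟨E⟩ w b p γ

lemma pnil_ne_cons {w b : V} (p : @Quiver.Path V ⟨E⟩ w b) (γ : E b w) :
    @Quiver.Path.nil V ⟨E⟩ w ≠ @Quiver.Path.cons V ⟨E⟩ w b w p γ :=
  (pcons_ne_nil p γ).symm

lemma pobj_eq {w b b' i : V} {p : @Quiver.Path V ⟨E⟩ w b} {p' : @Quiver.Path V ⟨E⟩ w b'}
    {γ : E b i} {γ' : E b' i}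
    (h : @Quiver.Path.cons V ⟨E⟩ w b i p γ = @Quiver.Path.cons V ⟨E⟩ w b' i p' γ') :
    b = b' :=
  @Quiver.Path.obj_eq_of_cons_eq_cons V ⟨E⟩ w b b' i p p' γ γ' h

lemma phom_heq {w b b' i : V} {p : @Quiver.Path V ⟨E⟩ w b} {p' : @Quiver.Path V ⟨E⟩ w b'}
    {γ : E b i} {γ' : E b' i}
    (h : @Quiver.Path.cons V ⟨E⟩ w b i p γ = @Quiver.Path.cons V ⟨E⟩ w b' i p' γ') :
    HEq γ γ' :=
  @Quiver.Path.hom_heq_of_cons_eq_cons V ⟨E⟩ w b b' i p p' γ γ' h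

lemma ppath_heq {w b b' i : V} {p : @Quiver.Path V ⟨E⟩ w b} {p' : @Quiver.Path V ⟨E⟩ w b'}
    {γ : E b i} {γ' : E b' i}
    (h : @Quiver.Path.cons V ⟨E⟩ w b i p γ = @Quiver.Path.cons V ⟨E⟩ w b' i p' γ') :
    HEq p p' :=
  @Quiver.Path.heq_of_cons_eq_cons V ⟨E⟩ w b b' i p p' γ γ' h

lemma uMap_def (X : QRep Λ E) (i : V) :
    X.uMap i = DirectSum.toModule Λ (Σ j : V, E j i) (X.obj i)
      (fun a : Σ j : V, E j i => X.map a.2) := rfl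

lemma map_eq_uMap_lof (X : QRep Λ E) {i j : V} (β : E i j) (x : X.obj i) :
    X.map β x = X.uMap j (DirectSum.lof Λ _ (fun a : Σ k : V, E k j => X.obj a.1) ⟨i, β⟩ x) := by
  exact (DirectSum.toModule_lof (R := Λ) (M := fun a : Σ k : V, E k j => X.obj a.1)
    (N := X.obj j) (φ := fun a : Σ k : V, E k j => X.map a.2) ⟨i, β⟩ x).symm

lemma uMap_eq_sum (X : QRep Λ E) (hV : Fintype V) (hE : ∀ i j, Fintype (E i j)) (i : V)
    (x : DirectSum (Σ j : V, E j i) fun a => X.obj a.1) :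
    X.uMap i x = ∑ a : Σ j : V, E j i, X.map a.2 (x a) := by
  letI := hV; letI := hE
  have h1 : ∀ a : Σ j : V, E j i,
      X.uMap i (DirectSum.of (fun a : Σ j : V, E j i => X.obj a.1) a (x a))
        = X.map a.2 (x a) := by
    intro a
    rw [← DirectSum.lof_eq_of Λ (Σ j : V, E j i) (fun a : Σ j : V, E j i => X.obj a.1) a (x a)]
    exact DirectSum.toModule_lof (R := Λ) (M := fun a : Σ j : V, E j i => X.obj a.1)
      (N := X.obj i) (φ := fun a : Σ j : V, E j i => X.map a.2) a (x a)
  conv_lhs => rw [← DirectSum.sum_univ_of x]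
  rw [map_sum]
  exact Finset.sum_congr rfl fun a _ => h1 a

section EMapLemmas
variable {v w : V} {J : Type} [AddCommGroup J] [Module Λ J]

lemma EMap_self (M : QRep Λ E) (α : E v w) (e : M.obj v →ₗ[Λ] J) :
    EMap M α e α
      = (Finsupp.lsingle (R := Λ) (M := J) (@Quiver.Path.nil V ⟨E⟩ w)).comp e := by
  delta EMap
  rw [dif_pos rfl]
  try simp only [and_casesOn_eq, eq_ndrec_self, eq_rec_self]

lemma EMap_ne (M : QRep Λ E) (α : E v w) (e : M.obj v →ₗ[Λ] J) {i j : V} (β : E i j)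
    (h : (⟨i, ⟨j, β⟩⟩ : Σ a : V, Σ b : V, E a b) ≠ ⟨v, ⟨w, α⟩⟩) :
    EMap M α e β = 0 := by
  delta EMap
  rw [dif_neg h]

lemma EMap_apply_cons (M : QRep Λ E) (α : E v w) (e : M.obj v →ₗ[Λ] J) {i j : V} (β : E i j)
    (x : M.obj i) {b : V} (p : @Quiver.Path V ⟨E⟩ w b) (γ : E b j) :
    EMap M α e β x (@Quiver.Path.cons V ⟨E⟩ w b j p γ) = 0 := by
  by_cases h : (⟨i, ⟨j, β⟩⟩ : Σ a : V, Σ b : V, E a b) = ⟨v, ⟨w, α⟩⟩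
  · obtain ⟨rfl, h2⟩ := Sigma.mk.inj_iff.mp h
    obtain ⟨rfl, h3⟩ := Sigma.mk.inj_iff.mp (eq_of_heq h2)
    obtain rfl := eq_of_heq h3
    rw [EMap_self]
    exact Finsupp.single_eq_of_ne' (pnil_ne_cons p γ)
  · rw [EMap_ne M α e β h]
    rfl

/-- the `mapDomain` linear map along path extension, with domains spelled via `QRep.Path` -/
noncomputable def lmd (w i j : V) (β : E i j) (J : Type) [AddCommGroup J] [Module Λ J] :
    (Path E w i →₀ J) →ₗ[Λ] (Path E w j →₀ J) :=
  Finsupp.lmapDomain J Λ (fun p => @Quiver.Path.cons V ⟨E⟩ w i j p β)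

lemma lmd_apply {w i j : V} (β : E i j) (f : Path E w i →₀ J) :
    lmd (Λ := Λ) w i j β J f
      = Finsupp.mapDomain (fun p => @Quiver.Path.cons V ⟨E⟩ w i j p β) f := rfl

lemma lmd_apply_nil {w i : V} (β : E i w) (f : Path E w i →₀ J) :
    lmd (Λ := Λ) w i w β J f (@Quiver.Path.nil V ⟨E⟩ w) = 0 := by
  rw [lmd_apply (Λ := Λ) β f]
  apply Finsupp.mapDomain_notin_range
  rintro ⟨p', hp⟩
  exact pcons_ne_nil p' β hp

lemma pcons_injective {w i j : V} (β : E i j) :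
    Function.Injective (fun p => @Quiver.Path.cons V ⟨E⟩ w i j p β) := by
  intro p1 p2 hp
  exact eq_of_heq (ppath_heq hp)

lemma lmd_apply_cons_self {w i j : V} (β : E i j) (f : Path E w i →₀ J)
    (p : @Quiver.Path V ⟨E⟩ w i) :
    lmd (Λ := Λ) w i j β J f (@Quiver.Path.cons V ⟨E⟩ w i j p β) = f p := by
  rw [lmd_apply (Λ := Λ) β f]
  exact Finsupp.mapDomain_apply (pcons_injective β) f p

lemma lmd_apply_cons_ne {w i j b : V} (β : E i j) (f : Path E w i →₀ J)
    (p : @Quiver.Path V ⟨E⟩ w b) (γ : E b j)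
    (h : (⟨i, β⟩ : Σ k : V, E k j) ≠ ⟨b, γ⟩) :
    lmd (Λ := Λ) w i j β J f (@Quiver.Path.cons V ⟨E⟩ w b j p γ) = 0 := by
  rw [lmd_apply (Λ := Λ) β f]
  apply Finsupp.mapDomain_notin_range
  rintro ⟨p'', hp⟩
  apply h
  obtain rfl := pobj_eq hp
  obtain rfl := eq_of_heq (phom_heq hp)
  rfl

lemma lsingle_comp_eval_nil {w : V} {J : Type} [AddCommGroup J] [Module Λ J]
    {A : Type} [AddCommGroup A] [Module Λ A] (e' : A →ₗ[Λ] J) (z : A) :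
    (((Finsupp.lsingle (R := Λ) (M := J) (@Quiver.Path.nil V ⟨E⟩ w) :
        J →ₗ[Λ] (Path E w w →₀ J))).comp e') z (@Quiver.Path.nil V ⟨E⟩ w) = e' z := by
  have h1 : (((Finsupp.lsingle (R := Λ) (M := J) (@Quiver.Path.nil V ⟨E⟩ w) :
        J →ₗ[Λ] (Path E w w →₀ J))).comp e') z
      = Finsupp.single (@Quiver.Path.nil V ⟨E⟩ w) (e' z) := rfl
  rw [h1]
  exact Finsupp.single_eq_same

end EMapLemmas

open Classical in
/-- the prescription map on the direct sum of incoming branches: `θ` on the branch `β`,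
zero elsewhere -/
noncomputable def psiAux (X : QRep Λ E) {J : Type} [AddCommGroup J] [Module Λ J]
    {i j : V} (β : E i j) (θ : X.obj i →ₗ[Λ] J) :
    DirectSum (Σ k : V, E k j) (fun a => X.obj a.1) →ₗ[Λ] J :=
  DirectSum.toModule Λ _ _ (fun a =>
    if h : a = (⟨i, β⟩ : Σ k : V, E k j) then by subst h; exact θ else 0)

lemma psiAux_lof_self (X : QRep Λ E) {J : Type} [AddCommGroup J] [Module Λ J]
    {i j : V} (β : E i j) (θ : X.obj i →ₗ[Λ] J) (x : X.obj i) :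
    psiAux X β θ (DirectSum.lof Λ _ (fun a : Σ k : V, E k j => X.obj a.1) ⟨i, β⟩ x) = θ x := by
  delta psiAux
  rw [DirectSum.toModule_lof, dif_pos rfl]
  try simp only [and_casesOn_eq, eq_ndrec_self, eq_rec_self]
  try rfl

lemma psiAux_lof_ne (X : QRep Λ E) {J : Type} [AddCommGroup J] [Module Λ J]
    {i j : V} (β : E i j) (θ : X.obj i →ₗ[Λ] J) (a : Σ k : V, E k j)
    (h : a ≠ (⟨i, β⟩ : Σ k : V, E k j)) (x : X.obj a.1) :
    psiAux X β θ (DirectSum.lof Λ _ (fun a : Σ k : V, E k j => X.obj a.1) a x) = 0 := by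
  delta psiAux
  rw [DirectSum.toModule_lof, dif_neg h]
  try rfl

lemma exists_extension {J A B : Type} [AddCommGroup J] [Module Λ J] [AddCommGroup A]
    [Module Λ A] [AddCommGroup B] [Module Λ B] (hJ : Module.Injective Λ J)
    (ι : A →ₗ[Λ] B) (hι : Function.Injective ι) (ψ : A →ₗ[Λ] J) :
    ∃ φ : B →ₗ[Λ] J, ∀ x, φ (ι x) = ψ x :=
  hJ.out ι hι ψ

/-- the family of maps to the injective module `J`, defined by recursion on paths -/
noncomputable def hfam (G : QRep Λ E) {J : Type} [AddCommGroup J] [Module Λ J]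
    (hJ : Module.Injective Λ J) (hsm : ∀ j : V, Function.Injective (G.uMap j))
    {v w : V} (α : E v w) (base : G.obj v →ₗ[Λ] J) :
    ∀ {j : V}, @Quiver.Path V ⟨E⟩ w j → (G.obj j →ₗ[Λ] J) := fun {j} q =>
  @Quiver.Path.rec V ⟨E⟩ w (fun j _ => G.obj j →ₗ[Λ] J)
    ((exists_extension hJ (G.uMap w) (hsm w) (psiAux G α base)).choose)
    (fun {b c} _ β ih =>
      (exists_extension hJ (G.uMap c) (hsm c) (psiAux G β ih)).choose) j q

section HfamLemmas
variable (G : QRep Λ E) {J : Type} [AddCommGroup J] [Module Λ J]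
  (hJ : Module.Injective Λ J) (hsm : ∀ j : V, Function.Injective (G.uMap j))
  {v w : V} (α : E v w) (base : G.obj v →ₗ[Λ] J)

lemma hfam_nil :
    hfam G hJ hsm α base (@Quiver.Path.nil V ⟨E⟩ w)
      = (exists_extension hJ (G.uMap w) (hsm w) (psiAux G α base)).choose := rfl

lemma hfam_cons {b c : V} (p : @Quiver.Path V ⟨E⟩ w b) (β : E b c) :
    hfam G hJ hsm α base (@Quiver.Path.cons V ⟨E⟩ w b c p β)
      = (exists_extension hJ (G.uMap c) (hsm c)
          (psiAux G β (hfam G hJ hsm α base p))).choose := rfl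

lemma hfam_nil_apply_self (x : G.obj v) :
    hfam G hJ hsm α base (@Quiver.Path.nil V ⟨E⟩ w) (G.map α x) = base x := by
  rw [hfam_nil, map_eq_uMap_lof,
    (exists_extension hJ (G.uMap w) (hsm w) (psiAux G α base)).choose_spec]
  exact psiAux_lof_self G α base x

lemma hfam_nil_apply_ne {i : V} (β : E i w)
    (h : (⟨i, β⟩ : Σ k : V, E k w) ≠ ⟨v, α⟩) (x : G.obj i) :
    hfam G hJ hsm α base (@Quiver.Path.nil V ⟨E⟩ w) (G.map β x) = 0 := by
  rw [hfam_nil, map_eq_uMap_lof,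
    (exists_extension hJ (G.uMap w) (hsm w) (psiAux G α base)).choose_spec]
  exact psiAux_lof_ne G α base ⟨i, β⟩ h x

lemma hfam_cons_apply_self {b c : V} (p : @Quiver.Path V ⟨E⟩ w b) (β : E b c) (x : G.obj b) :
    hfam G hJ hsm α base (@Quiver.Path.cons V ⟨E⟩ w b c p β) (G.map β x)
      = hfam G hJ hsm α base p x := by
  rw [hfam_cons, map_eq_uMap_lof,
    (exists_extension hJ (G.uMap c) (hsm c)
      (psiAux G β (hfam G hJ hsm α base p))).choose_spec]
  exact psiAux_lof_self G β (hfam G hJ hsm α base p) x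

lemma hfam_cons_apply_ne {b c i : V} (p : @Quiver.Path V ⟨E⟩ w b) (γ : E b c) (β : E i c)
    (h : (⟨i, β⟩ : Σ k : V, E k c) ≠ ⟨b, γ⟩) (x : G.obj i) :
    hfam G hJ hsm α base (@Quiver.Path.cons V ⟨E⟩ w b c p γ) (G.map β x) = 0 := by
  rw [hfam_cons, map_eq_uMap_lof,
    (exists_extension hJ (G.uMap c) (hsm c)
      (psiAux G γ (hfam G hJ hsm α base p))).choose_spec]
  exact psiAux_lof_ne G γ (hfam G hJ hsm α base p) ⟨i, β⟩ h x

end HfamLemmas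

/-- The one-step lifting lemma: a morphism to `N` from a separated monic representation
lifts through `MonoA N α e`. -/
lemma lift_step (hV : Fintype V) (hE : ∀ i j, Fintype (E i j)) (hacyc : Acyclic E)
    (G N : QRep Λ E) (hsmG : SeparatedMonic G) {v w : V} (α : E v w)
    {J : Type} [AddCommGroup J] [Module Λ J] (hJ : Module.Injective Λ J)
    (e : N.obj v →ₗ[Λ] J) (g' : Hom G N) :
    ∃ g'' : Hom G (MonoA N α e), (MonoAProj N α e).comp g'' = g' := by
  haveI hfinp : ∀ j : V, Fintype (@Quiver.Path V ⟨E⟩ w j) := fun j =>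
    @Fintype.ofFinite _ (@qpath_finite V ⟨E⟩ hV hE hacyc w j)
  set base : G.obj v →ₗ[Λ] J := e.comp (g'.app v) with hbase
  set hap : ∀ j : V, G.obj j →ₗ[Λ] (Path E w j →₀ J) := fun j =>
    ∑ q : @Quiver.Path V ⟨E⟩ w j, (Finsupp.lsingle q).comp (hfam G hJ hsmG α base q)
    with hhap
  have hap_apply : ∀ (j : V) (x : G.obj j) (q : @Quiver.Path V ⟨E⟩ w j),
      hap j x q = hfam G hJ hsmG α base q x := by
    intro j x q
    have e1 : hap j x = ∑ q' : @Quiver.Path V ⟨E⟩ w j,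
        ((Finsupp.lsingle q').comp (hfam G hJ hsmG α base q')) x := by
      rw [hhap]
      exact LinearMap.sum_apply _ _ x
    rw [e1, Finsupp.finset_sum_apply]
    simp only [LinearMap.comp_apply, Finsupp.lsingle_apply, Finsupp.single_apply]
    rw [Finset.sum_ite_eq' Finset.univ q]
    simp
  refine ⟨⟨fun j => LinearMap.prod (g'.app j) (hap j), ?_⟩, ?_⟩
  · intro i j β
    apply LinearMap.ext; intro x
    refine Prod.ext ?_ ?_
    · exact LinearMap.congr_fun (g'.comm β) x
    · show lmd (Λ := Λ) w i j β J (hap i x) + EMap N α e β (g'.app i x) = hap j (G.map β x)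
      apply Finsupp.ext; intro q
      rw [Finsupp.add_apply, hap_apply]
      cases q with
      | nil =>
        rw [lmd_apply_nil (Λ := Λ), zero_add]
        by_cases hc : (⟨i, β⟩ : Σ k : V, E k w) = ⟨v, α⟩
        · obtain ⟨rfl, h3⟩ := Sigma.mk.inj_iff.mp hc
          obtain rfl := eq_of_heq h3
          rw [EMap_self, hfam_nil_apply_self, lsingle_comp_eval_nil]
          rw [hbase]
          rfl
        · have hc' : (⟨i, ⟨w, β⟩⟩ : Σ a : V, Σ b : V, E a b) ≠ ⟨v, ⟨w, α⟩⟩ := by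
            intro hh
            apply hc
            obtain ⟨rfl, h2⟩ := Sigma.mk.inj_iff.mp hh
            obtain ⟨-, h3⟩ := Sigma.mk.inj_iff.mp (eq_of_heq h2)
            obtain rfl := eq_of_heq h3
            rfl
          rw [EMap_ne N α e β hc', hfam_nil_apply_ne G hJ hsmG α base β hc]
          rfl
      | @cons b _ p' γ =>
        rw [EMap_apply_cons, add_zero]
        by_cases hc : (⟨i, β⟩ : Σ k : V, E k j) = ⟨b, γ⟩
        · obtain ⟨rfl, h3⟩ := Sigma.mk.inj_iff.mp hc
          obtain rfl := eq_of_heq h3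
          rw [hfam_cons_apply_self, lmd_apply_cons_self (Λ := Λ), hap_apply]
        · rw [lmd_apply_cons_ne β (hap i x) p' γ hc,
            hfam_cons_apply_ne G hJ hsmG α base p' γ β hc]
  · apply Hom.ext
    funext j
    exact LinearMap.ext fun x => rfl

/-- lifting along the whole iterated Mono construction -/
lemma iter_lift (hV : Fintype V) (hE : ∀ i j, Fintype (E i j)) (hacyc : Acyclic E)
    {L : List (Σ i : V, Σ j : V, E i j)} {M N : QRep Λ E} {π : Hom N M}
    (hiter : IsMonoIter L M N π) (G : QRep Λ E) (hsmG : SeparatedMonic G) :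
    ∀ f : Hom G M, ∃ g : Hom G N, π.comp g = f := by
  induction hiter with
  | nil M' =>
    intro f
    exact ⟨f, Hom.ext (funext fun i => LinearMap.id_comp _)⟩
  | @cons L' M' N' π' v w α J _ _ e henv h ih =>
    intro f
    obtain ⟨g', hg'⟩ := ih f
    obtain ⟨g'', hg''⟩ := lift_step hV hE hacyc G N' hsmG α henv.1 e g'
    refine ⟨g'', ?_⟩
    have hassoc : (π'.comp (MonoAProj N' α e)).comp g''
        = π'.comp ((MonoAProj N' α e).comp g'') := Hom.ext (funext fun i => rfl)
    rw [hassoc, hg'', hg']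

/-- the key vanishing of the first component of the `α`-branch, read off at the
empty path -/
lemma alpha_comp_zero (hV : Fintype V) (hE : ∀ i j, Fintype (E i j)) (N₀ : QRep Λ E)
    {v w : V} (α : E v w) {J : Type} [AddCommGroup J] [Module Λ J]
    (e : N₀.obj v →ₗ[Λ] J) (he : Function.Injective e)
    (y : ∀ a : Σ j : V, E j w, N₀.obj a.1 × (Path E w a.1 →₀ J))
    (hq0 : (∑ a : Σ j : V, E j w,
        ((lmd (Λ := Λ) w a.1 w a.2 J ((y a).2)) (@Quiver.Path.nil V ⟨E⟩ w)
          + (EMap N₀ α e a.2 ((y a).1)) (@Quiver.Path.nil V ⟨E⟩ w))) = 0) :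
    (y ⟨v, α⟩).1 = 0 := by
  letI := hV; letI := hE
  simp only [lmd_apply_nil (Λ := Λ), zero_add] at hq0
  have hside : ∀ a' ∈ Finset.univ, a' ≠ (⟨v, α⟩ : Σ j : V, E j w) →
      (EMap N₀ α e a'.2 ((y a').1)) (@Quiver.Path.nil V ⟨E⟩ w) = 0 := by
    rintro ⟨b', β'⟩ - hne
    have hne' : (⟨b', ⟨w, β'⟩⟩ : Σ i' : V, Σ j' : V, E i' j') ≠ ⟨v, ⟨w, α⟩⟩ := by
      intro hh
      apply hne
      obtain ⟨rfl, h2'⟩ := Sigma.mk.inj_iff.mp hh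
      obtain ⟨-, h3'⟩ := Sigma.mk.inj_iff.mp (eq_of_heq h2')
      obtain rfl := eq_of_heq h3'
      rfl
    rw [EMap_ne N₀ α e β' hne']
    rfl
  rw [Finset.sum_eq_single (⟨v, α⟩ : Σ j : V, E j w) hside
    (fun hn => absurd (Finset.mem_univ _) hn)] at hq0
  rw [EMap_self] at hq0
  erw [lsingle_comp_eval_nil] at hq0
  apply he
  rw [map_zero]
  exact hq0

/-- partial separated-monicity along the iterated Mono construction -/
lemma iter_pmonic (hV : Fintype V) (hE : ∀ i j, Fintype (E i j)) (hacyc : Acyclic E)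
    {L : List (Σ i : V, Σ j : V, E i j)} {M N : QRep Λ E} {π : Hom N M}
    (hiter : IsMonoIter L M N π) :
    ∀ (i : V) (x : DirectSum (Σ j : V, E j i) fun a => N.obj a.1),
      (∀ a : Σ j : V, E j i, (⟨a.1, ⟨i, a.2⟩⟩ : Σ i' : V, Σ j' : V, E i' j') ∉ L → x a = 0) →
      N.uMap i x = 0 → x = 0 := by
  induction hiter with
  | nil M' =>
    intro i x hs _
    refine DFinsupp.ext fun a => ?_
    rw [hs a List.not_mem_nil]
    rfl
  | @cons L' M' N₀ π₀ v w α J _ _ e henv h ih =>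
    intro i x hsupp hzero
    letI := hV; letI := hE
    have hmap : ∀ a : Σ j : V, E j i, (MonoA N₀ α e).map a.2 (x a) =
        (N₀.map a.2 ((x a).1),
         lmd (Λ := Λ) w a.1 i a.2 J ((x a).2) + EMap N₀ α e a.2 ((x a).1)) := fun a => rfl
    have hsum : ∑ a : Σ j : V, E j i, (MonoA N₀ α e).map a.2 (x a) = 0 := by
      rw [← uMap_eq_sum _ hV hE]
      exact hzero
    simp only [hmap] at hsum
    have hfst : ∑ a : Σ j : V, E j i, N₀.map a.2 ((x a).1) = 0 := by
      have h' := congrArg Prod.fst hsum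
      erw [Prod.fst_sum] at h'
      exact h'
    have hsnd : ∑ a : Σ j : V, E j i,
        (lmd (Λ := Λ) w a.1 i a.2 J ((x a).2) + EMap N₀ α e a.2 ((x a).1)) = 0 := by
      have h' := congrArg Prod.snd hsum
      erw [Prod.snd_sum] at h'
      exact h'
    have hq : ∀ q : @Quiver.Path V ⟨E⟩ w i, (∑ a : Σ j : V, E j i,
        ((lmd (Λ := Λ) w a.1 i a.2 J ((x a).2)) q + (EMap N₀ α e a.2 ((x a).1)) q)) = 0 := by
      intro q
      have h' := congrArg (fun z : (Path E w i →₀ J) => z q) hsnd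
      simp only [Finsupp.finset_sum_apply, Finsupp.add_apply, Finsupp.zero_apply] at h'
      exact h'
    -- second components vanish
    have hx2 : ∀ a : Σ j : V, E j i, (x a).2 = 0 := by
      rintro ⟨b, β⟩
      apply Finsupp.ext; intro p
      have hq' := hq (@Quiver.Path.cons V ⟨E⟩ w b i p β)
      simp only [EMap_apply_cons, add_zero] at hq'
      have hside : ∀ a' ∈ Finset.univ, a' ≠ (⟨b, β⟩ : Σ j : V, E j i) →
          (lmd (Λ := Λ) w a'.1 i a'.2 J ((x a').2)) (@Quiver.Path.cons V ⟨E⟩ w b i p β) = 0 := by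
        rintro ⟨b', β'⟩ - hne
        refine lmd_apply_cons_ne (Λ := Λ) β' ((x ⟨b', β'⟩).2) p β ?_
        intro hh
        apply hne
        obtain ⟨rfl, h3⟩ := Sigma.mk.inj_iff.mp hh
        obtain rfl := eq_of_heq h3
        rfl
      rw [Finset.sum_eq_single (⟨b, β⟩ : Σ j : V, E j i) hside
        (fun hn => absurd (Finset.mem_univ _) hn)] at hq'
      rw [lmd_apply_cons_self (Λ := Λ)] at hq'
      rw [Finsupp.zero_apply]
      exact hq'
    -- first components vanish where allowed
    have hss : ∀ a : Σ j : V, E j i,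
        (⟨a.1, ⟨i, a.2⟩⟩ : Σ i' : V, Σ j' : V, E i' j') ∉ L' → (x a).1 = 0 := by
      rintro ⟨b, β⟩ ha
      by_cases hm : (⟨b, ⟨i, β⟩⟩ : Σ i' : V, Σ j' : V, E i' j') = ⟨v, ⟨w, α⟩⟩
      · obtain ⟨rfl, h2⟩ := Sigma.mk.inj_iff.mp hm
        obtain ⟨rfl, h3⟩ := Sigma.mk.inj_iff.mp (eq_of_heq h2)
        obtain rfl := eq_of_heq h3
        exact alpha_comp_zero hV hE N₀ _ e henv.2.1 (fun a => x a)
          (hq (@Quiver.Path.nil V ⟨E⟩ _))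
      · have hnm : (⟨b, ⟨i, β⟩⟩ : Σ i' : V, Σ j' : V, E i' j')
            ∉ ((⟨v, ⟨w, α⟩⟩ : Σ i' : V, Σ j' : V, E i' j') :: L') := by
          rw [List.mem_cons, not_or]
          exact ⟨hm, ha⟩
        rw [hsupp ⟨b, β⟩ hnm]
        rfl
    -- apply the induction hypothesis to the first components
    set x₁ : DirectSum (Σ j : V, E j i) (fun a => N₀.obj a.1) :=
      DFinsupp.mapRange
        (fun (a : Σ j : V, E j i) (y : N₀.obj a.1 × (Path E w a.1 →₀ J)) => y.1)
        (fun a => rfl) x with hx₁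
    have hval : ∀ a : Σ j : V, E j i, x₁ a = (x a).1 := fun a =>
      DFinsupp.mapRange_apply _ _ x a
    have h1 : N₀.uMap i x₁ = 0 := by
      rw [uMap_eq_sum _ hV hE]
      calc ∑ a : Σ j : V, E j i, N₀.map a.2 (x₁ a)
          = ∑ a : Σ j : V, E j i, N₀.map a.2 ((x a).1) :=
            Finset.sum_congr rfl fun a _ => by rw [hval]
        _ = 0 := hfst
    have hx1 : x₁ = 0 := ih i x₁ (fun a ha => by rw [hval]; exact hss a ha) h1
    refine DFinsupp.ext fun a => ?_
    have h1a : (x a).1 = 0 := by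
      rw [← hval, hx1]
      rfl
    show x a = 0
    exact Prod.ext h1a (hx2 a)

end EWorld

end QRepAux

/-- For an ordering `α_s, …, α_1` of all the arrows of the finite
acyclic quiver `Q` such that for `i > j` there is no path from `t(α_i)` to
`s(α_j)`, the module `Mono(M)` is separated monic (hence Gorenstein-projective),
and the epimorphism `Mono(M) → M` is a right approximation of `M` in `Gproj ΛQ`. -/
theorem mono_is_separatedMonic_and_right_approximation
    (k : Type) [Field k] (Λ : Type) [Ring Λ] [Algebra k Λ] [FiniteDimensional k Λ]
    (hself : Module.Injective Λ Λ)
    {V : Type} [Fintype V] {E : V → V → Type} [∀ i j, Fintype (E i j)]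
    (hacyc : QRep.Acyclic E)
    (L : List (Σ i : V, Σ j : V, E i j))
    (hL : L.Pairwise fun x y => IsEmpty (QRep.Path E y.2.1 x.1))
    (hnodup : L.Nodup)
    (hall : ∀ (i j : V) (a : E i j), (⟨i, ⟨j, a⟩⟩ : Σ i : V, Σ j : V, E i j) ∈ L)
    (M N : QRep Λ E) (hfin : ∀ i, Module.Finite Λ (M.obj i))
    (π : QRep.Hom N M) (hiter : QRep.IsMonoIter L M N π) :
    QRep.SeparatedMonic N ∧ QRep.IsRightApprox π := by
  have hsm : QRep.SeparatedMonic N := by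
    intro i
    rw [injective_iff_map_eq_zero]
    intro x hx
    exact QRepAux.iter_pmonic inferInstance inferInstance hacyc hiter i x
      (fun a ha => absurd (hall a.1 i a.2) ha) hx
  exact ⟨hsm, hsm, fun G' hG' f =>
    QRepAux.iter_lift inferInstance inferInstance hacyc hiter G' hG' f⟩
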